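/- Let N ≥ 1 be an integer and ρ ∈ [0,1] a real number. Then every eigenvalue of the N×N complex matrix P = I − Q_ρ is a real number lying in the closed interval [0,2] (explicitly, the eigenvalues are 1 − 2√(ρ(1−ρ))·cos(ℓπ/(N+1)) for ℓ = 1,…,N, which are real and lie in [0,2]). -/

import Mathlib

open Matrix Polynomial Real

/-- The `N × N` complex tridiagonal matrix with superdiagonal entries `ρ` and
subdiagonal entries `1 - ρ`. -/
def Qmat (N : ℕ) (ρ : ℝ) : Matrix (Fin N) (Fin N) ℂ :=
  Matrix.of fun i j =>
    if (j : ℕ) = (i : ℕ) + 1 then (ρ : ℂ)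
    else if (i : ℕ) = (j : ℕ) + 1 then ((1 - ρ : ℝ) : ℂ) else 0

/-- The reduced graph Laplacian `P = I - Q_ρ`. -/
def Pmat (N : ℕ) (ρ : ℝ) : Matrix (Fin N) (Fin N) ℂ :=
  1 - Qmat N ρ

lemma eval_charpoly' {n : Type*} [DecidableEq n] [Fintype n] (M : Matrix n n ℂ) (z : ℂ) :
    M.charpoly.eval z = (z • (1 : Matrix n n ℂ) - M).det := by
  rw [Matrix.charpoly, ← Polynomial.coe_evalRingHom, RingHom.map_det]
  congr 1
  ext i j
  by_cases h : i = j <;>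
    simp [Matrix.charmatrix_apply, h, Matrix.one_apply, Matrix.diagonal_apply]

lemma spec_det(N : ℕ) (ρ : ℝ) (μ : ℂ) (h : μ ∈ spectrum ℂ (Pmat N ρ)) :
    ((1 - μ) • (1 : Matrix (Fin N) (Fin N) ℂ) - Qmat N ρ).det = 0 := by
  rw [spectrum.mem_iff] at h
  have e : algebraMap ℂ (Matrix (Fin N) (Fin N) ℂ) μ - Pmat N ρ
      = -((1 - μ) • (1 : Matrix (Fin N) (Fin N) ℂ) - Qmat N ρ) := by
    rw [Algebra.algebraMap_eq_smul_one, Pmat]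
    module
  rw [e] at h
  by_contra hd
  exact h (((Matrix.isUnit_iff_isUnit_det _).mpr (isUnit_iff_ne_zero.mpr hd)).neg)

lemma det_deg(N : ℕ) (z : ℂ) (ρ : ℝ) (hρ : ρ = 0 ∨ ρ = 1) :
    (z • (1 : Matrix (Fin N) (Fin N) ℂ) - Qmat N ρ).det = z ^ N := by
  have hdiag : ∀ i : Fin N, (z • (1 : Matrix (Fin N) (Fin N) ℂ) - Qmat N ρ) i i = z := by
    intro i
    simp [Qmat, Matrix.one_apply]
  rcases hρ with h | h
  · subst h
    have ht : (z • (1 : Matrix (Fin N) (Fin N) ℂ) - Qmat N 0).BlockTriangular OrderDual.toDual := by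
      intro i j hij
      have hij' : (i : ℕ) < (j : ℕ) := hij
      simp only [Matrix.sub_apply, Matrix.smul_apply, Matrix.one_apply, Qmat, Matrix.of_apply, Fin.ext_iff]
      split_ifs <;> first | (exfalso; omega) | simp
    rw [Matrix.det_of_lowerTriangular _ ht]
    simp [hdiag]
  · subst h
    have ht : (z • (1 : Matrix (Fin N) (Fin N) ℂ) - Qmat N 1).BlockTriangular id := by
      intro i j hij
      have hij' : (j : ℕ) < (i : ℕ) := hij
      simp only [Matrix.sub_apply, Matrix.smul_apply, Matrix.one_apply, Qmat, Matrix.of_apply, Fin.ext_iff]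
      split_ifs <;> first | (exfalso; omega) | simp
    rw [Matrix.det_of_upperTriangular ht]
    simp [hdiag]

lemma eig_det (N : ℕ) (hN : 1 ≤ N) (ρ : ℝ) (hρ0 : 0 < ρ) (hρ1 : ρ < 1)
    (ℓ : ℕ) (hl1 : 1 ≤ ℓ) (hlN : ℓ ≤ N) :
    ((((2 * Real.sqrt (ρ * (1 - ρ)) * Real.cos (ℓ * Real.pi / (N + 1)) : ℝ)) : ℂ) •
      (1 : Matrix (Fin N) (Fin N) ℂ) - Qmat N ρ).det = 0 := by
  set θ : ℝ := ℓ * Real.pi / (N + 1) with hθ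
  set c : ℝ := Real.sqrt (ρ * (1 - ρ)) with hc
  set t : ℝ := Real.sqrt ((1 - ρ) / ρ) with ht
  have ht0 : 0 < t := Real.sqrt_pos.mpr (div_pos (by linarith) hρ0)
  have ht2 : ρ * t ^ 2 = 1 - ρ := by
    rw [ht, Real.sq_sqrt (div_pos (by linarith) hρ0).le]; field_simp
  have hρt : ρ * t = c := by
    rw [hc, ht, show ρ * (1-ρ) = ρ^2 * ((1-ρ)/ρ) by field_simp,
      Real.sqrt_mul (by positivity), Real.sqrt_sq hρ0.le]
  set lam : ℝ := 2 * c * Real.cos θ with hlam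
  set w : ℕ → ℝ := fun k => t ^ k * Real.sin (k * θ) with hw
  have hrec : ∀ k : ℕ, ρ * w (k + 2) + (1 - ρ) * w k = lam * w (k + 1) := by
    intro k
    have h1 : ((k : ℝ) + 2) * θ = ((k : ℝ) + 1) * θ + θ := by ring
    have h2 : (k : ℝ) * θ = ((k : ℝ) + 1) * θ - θ := by ring
    simp only [hw]
    push_cast
    rw [h1, h2, Real.sin_add, Real.sin_sub]
    have h3 : (1 - ρ) * t ^ k = ρ * t ^ (k+2) := by rw [← ht2]; ring
    rw [hlam]
    linear_combination (Real.sin (((k:ℝ)+1)*θ)*Real.cos θ - Real.cos (((k:ℝ)+1)*θ)*Real.sin θ) * h3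
      + 2*t^(k+1)*Real.sin (((k:ℝ)+1)*θ)*Real.cos θ * hρt
  have hwN1 : w (N + 1) = 0 := by
    have h4 : ((N : ℝ) + 1) * θ = ℓ * Real.pi := by
      rw [hθ]; field_simp
    simp only [hw]; push_cast [h4]
    simp [Real.sin_nat_mul_pi]
  set v : Fin N → ℂ := fun k => ((w (k.val + 1) : ℝ) : ℂ) with hv
  have hsum : ∀ k : Fin N, ∑ j : Fin N, Qmat N ρ k j * v j
      = ((ρ * w (k.val + 2) + (1 - ρ) * w k.val : ℝ) : ℂ) := by
    intro k
    have hsplit : ∀ j : Fin N, Qmat N ρ k j * v j =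
        (if (j : ℕ) = (k : ℕ) + 1 then (ρ : ℂ) * v j else 0)
        + (if (k : ℕ) = (j : ℕ) + 1 then ((1 - ρ : ℝ) : ℂ) * v j else 0) := by
      intro j
      simp only [Qmat, Matrix.of_apply]
      split_ifs with h1 h2 <;> first | (exfalso; omega) | ring
    rw [Finset.sum_congr rfl (fun j _ => hsplit j), Finset.sum_add_distrib]
    have hs1 : ∑ j : Fin N, (if (j : ℕ) = (k : ℕ) + 1 then (ρ : ℂ) * v j else 0)
        = ((ρ * w (k.val + 2) : ℝ) : ℂ) := by
      by_cases h : (k : ℕ) + 1 < N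
      · have hcongr : ∑ j : Fin N, (if (j : ℕ) = (k : ℕ) + 1 then (ρ : ℂ) * v j else 0)
            = ∑ j : Fin N, (if j = (⟨k.val + 1, h⟩ : Fin N) then (ρ : ℂ) * v j else 0) :=
          Finset.sum_congr rfl (fun j _ => if_congr (by rw [Fin.ext_iff, Fin.val_mk]) rfl rfl)
        rw [hcongr, Finset.sum_ite_eq' Finset.univ (⟨k.val + 1, h⟩ : Fin N)
          (fun j => (ρ : ℂ) * v j)]
        simp only [Finset.mem_univ, if_pos, hv]
        push_cast; ring
      · have hk : (k : ℕ) + 1 = N := by omega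
        rw [Finset.sum_eq_zero (fun j _ => by
          rw [if_neg]; omega)]
        rw [show k.val + 2 = N + 1 by omega, hwN1]
        simp
    have hs2 : ∑ j : Fin N, (if (k : ℕ) = (j : ℕ) + 1 then ((1 - ρ : ℝ) : ℂ) * v j else 0)
        = (((1 - ρ) * w k.val : ℝ) : ℂ) := by
      rcases Nat.eq_zero_or_pos k.val with hk | hk
      · rw [Finset.sum_eq_zero (fun j _ => by rw [if_neg]; omega)]
        have hw0 : w 0 = 0 := by simp [hw]
        rw [hk, hw0]; simp
      · have hlt : k.val - 1 < N := by omega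
        have hcongr : ∑ j : Fin N, (if (k : ℕ) = (j : ℕ) + 1 then ((1 - ρ : ℝ) : ℂ) * v j else 0)
            = ∑ j : Fin N, (if j = (⟨k.val - 1, hlt⟩ : Fin N) then ((1 - ρ : ℝ) : ℂ) * v j else 0) :=
          Finset.sum_congr rfl (fun j _ => if_congr (by simp only [Fin.ext_iff, Fin.val_mk]; omega) rfl rfl)
        rw [hcongr, Finset.sum_ite_eq' Finset.univ (⟨k.val - 1, hlt⟩ : Fin N)
          (fun j => ((1 - ρ : ℝ) : ℂ) * v j)]
        simp only [Finset.mem_univ, if_pos, hv]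
        rw [show k.val - 1 + 1 = k.val by omega]
        push_cast; ring
    rw [hs1, hs2]; push_cast; ring
  have hmv : (((lam : ℝ) : ℂ) • (1 : Matrix (Fin N) (Fin N) ℂ) - Qmat N ρ).mulVec v = 0 := by
    funext k
    simp only [Matrix.mulVec, Matrix.sub_apply, Matrix.smul_apply, Matrix.one_apply, dotProduct,
      Pi.zero_apply, smul_eq_mul]
    have hterm : ∀ j : Fin N, ((((lam:ℝ):ℂ) * if k = j then 1 else 0) - Qmat N ρ k j) * v j
        = (if k = j then ((lam:ℝ):ℂ) * v j else 0) - Qmat N ρ k j * v j := by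
      intro j; split_ifs <;> ring
    rw [Finset.sum_congr rfl (fun j _ => by rw [hterm j]), Finset.sum_sub_distrib,
      Finset.sum_ite_eq Finset.univ k (fun j => ((lam:ℝ):ℂ) * v j), hsum k]
    simp only [Finset.mem_univ, if_pos, hv]
    rw [hrec k.val]
    push_cast; ring
  have hv0 : v ≠ 0 := by
    intro h
    have h1 : v ⟨0, hN⟩ = 0 := by rw [h]; rfl
    have hw1 : w 1 = t * Real.sin θ := by simp [hw]
    have hθpos : 0 < θ := by
      rw [hθ]; positivity
    have hθlt : θ < Real.pi := by
      rw [hθ]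
      rw [div_lt_iff₀ (by positivity)]
      have hcast : (ℓ : ℝ) < (N : ℝ) + 1 := by exact_mod_cast Nat.lt_succ_of_le hlN
      nlinarith [Real.pi_pos]
    have hsin : 0 < Real.sin θ := Real.sin_pos_of_pos_of_lt_pi hθpos hθlt
    simp only [hv] at h1
    rw [show (0:ℕ) + 1 = 1 from rfl, hw1] at h1
    have hne : t * Real.sin θ ≠ 0 := by positivity
    exact hne (by exact_mod_cast h1)
  rw [← Matrix.exists_mulVec_eq_zero_iff]
  exact ⟨v, hv0, hmv⟩


lemma bounds_aux (ρ : ℝ) (hρ : ρ ∈ Set.Icc (0 : ℝ) 1) (x : ℝ) :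
    0 ≤ 1 - 2 * Real.sqrt (ρ * (1 - ρ)) * Real.cos x ∧
    1 - 2 * Real.sqrt (ρ * (1 - ρ)) * Real.cos x ≤ 2 := by
  obtain ⟨h0, h1⟩ := hρ
  set c : ℝ := Real.sqrt (ρ * (1 - ρ)) with hc
  have hc0 : 0 ≤ c := Real.sqrt_nonneg _
  have hc2 : c ^ 2 = ρ * (1 - ρ) := Real.sq_sqrt (by nlinarith)
  have hchalf : c ≤ 1 / 2 := by
    have h4 : Real.sqrt (1 / 4) = 1 / 2 := by
      rw [show (1/4:ℝ) = (1/2)^2 by norm_num, Real.sqrt_sq (by norm_num)]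
    rw [hc]
    exact (Real.sqrt_le_sqrt (by nlinarith [sq_nonneg (ρ - 1/2)])).trans_eq h4
  have hcos1 : Real.cos x ≤ 1 := Real.cos_le_one x
  have hcos2 : -1 ≤ Real.cos x := Real.neg_one_le_cos x
  constructor <;> nlinarith

theorem stmt_3 (N : ℕ) (hN : 1 ≤ N) (ρ : ℝ) (hρ : ρ ∈ Set.Icc (0 : ℝ) 1) :
    ∀ μ ∈ spectrum ℂ (Pmat N ρ), ∃ ℓ : ℕ, 1 ≤ ℓ ∧ ℓ ≤ N ∧
      μ = ((1 - 2 * Real.sqrt (ρ * (1 - ρ)) * Real.cos (ℓ * Real.pi / (N + 1)) : ℝ) : ℂ) ∧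
      0 ≤ 1 - 2 * Real.sqrt (ρ * (1 - ρ)) * Real.cos (ℓ * Real.pi / (N + 1)) ∧
      1 - 2 * Real.sqrt (ρ * (1 - ρ)) * Real.cos (ℓ * Real.pi / (N + 1)) ≤ 2 := by
  intro μ hμ
  have hdet := spec_det N ρ μ hμ
  obtain ⟨h0, h1⟩ := hρ
  by_cases hdeg : ρ = 0 ∨ ρ = 1
  · -- degenerate case : μ = 1
    have hz : (1 - μ) ^ N = 0 := by rw [← det_deg N (1 - μ) ρ hdeg]; exact hdet
    have hμ1 : μ = 1 := by
      have := pow_eq_zero_iff (n := N) (by omega) |>.mp hz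
      linear_combination -this
    have hc : Real.sqrt (ρ * (1 - ρ)) = 0 := by
      rcases hdeg with h | h <;> simp [h]
    refine ⟨1, le_refl 1, hN, ?_, ?_, ?_⟩ <;> rw [hc] <;> norm_num [hμ1]
  · push_neg at hdeg
    have hρ0 : 0 < ρ := lt_of_le_of_ne h0 (Ne.symm hdeg.1)
    have hρ1 : ρ < 1 := lt_of_le_of_ne h1 hdeg.2
    set c : ℝ := Real.sqrt (ρ * (1 - ρ)) with hcdef
    have hcpos : 0 < c := Real.sqrt_pos.mpr (by nlinarith)
    set p : Polynomial ℂ := (Qmat N ρ).charpoly with hp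
    have hpne : p ≠ 0 := (Qmat N ρ).charpoly_monic.ne_zero
    have hdeg' : p.natDegree = N := by
      rw [hp, Matrix.charpoly_natDegree_eq_dim, Fintype.card_fin]
    set f : ℕ → ℂ := fun ℓ => ((2 * c * Real.cos (ℓ * Real.pi / (N + 1)) : ℝ) : ℂ) with hf
    -- each f ℓ is a root
    have hroot : ∀ ℓ ∈ Finset.Icc 1 N, f ℓ ∈ p.roots := by
      intro ℓ hℓ
      rw [Finset.mem_Icc] at hℓ
      rw [Polynomial.mem_roots hpne, Polynomial.IsRoot, hp, eval_charpoly']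
      exact eig_det N hN ρ hρ0 hρ1 ℓ hℓ.1 hℓ.2
    -- injectivity
    have hinj : Set.InjOn f (Finset.Icc 1 N) := by
      intro a ha b hb hab
      rw [Finset.coe_Icc, Set.mem_Icc] at ha hb
      have hra : (2 * c * Real.cos (a * Real.pi / (N + 1)) : ℝ)
          = (2 * c * Real.cos (b * Real.pi / (N + 1)) : ℝ) := by
        have hab' : ((2 * c * Real.cos (a * Real.pi / (N + 1)) : ℝ) : ℂ)
            = ((2 * c * Real.cos (b * Real.pi / (N + 1)) : ℝ) : ℂ) := hab
        exact_mod_cast hab'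
      have hcos : Real.cos (a * Real.pi / (N + 1)) = Real.cos (b * Real.pi / (N + 1)) :=
        mul_left_cancel₀ (by positivity : (2 * c : ℝ) ≠ 0) hra
      have hmem : ∀ m : ℕ, 1 ≤ m → m ≤ N → (m * Real.pi / (N + 1)) ∈ Set.Icc 0 Real.pi := by
        intro m hm1 hm2
        constructor
        · positivity
        · rw [div_le_iff₀ (by positivity)]
          have hm : (m : ℝ) ≤ (N : ℝ) + 1 := by
            have := Nat.le_succ_of_le hm2
            exact_mod_cast this
          nlinarith [Real.pi_pos, hm]
      have hteq := Real.injOn_cos (hmem a ha.1 ha.2) (hmem b hb.1 hb.2) hcos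
      have hNpos : (0:ℝ) < (N : ℝ) + 1 := by positivity
      have h2 : (a : ℝ) * Real.pi = (b : ℝ) * Real.pi := by
        calc (a:ℝ) * Real.pi = (a * Real.pi / ((N:ℝ)+1)) * ((N:ℝ)+1) := by field_simp
        _ = (b * Real.pi / ((N:ℝ)+1)) * ((N:ℝ)+1) := by rw [hteq]
        _ = (b:ℝ) * Real.pi := by field_simp
      have : (a : ℝ) = (b : ℝ) := mul_right_cancel₀ Real.pi_ne_zero h2
      exact_mod_cast this
    set S : Finset ℂ := (Finset.Icc 1 N).image f with hS
    have hScard : S.card = N := by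
      rw [hS, Finset.card_image_of_injOn hinj, Nat.card_Icc]; omega
    have hsub : S ⊆ p.roots.toFinset := by
      intro z hz
      rw [hS, Finset.mem_image] at hz
      obtain ⟨ℓ, hℓ, rfl⟩ := hz
      exact Multiset.mem_toFinset.mpr (hroot ℓ hℓ)
    have hcardle : p.roots.toFinset.card ≤ N := by
      calc p.roots.toFinset.card ≤ Multiset.card p.roots := p.roots.toFinset_card_le
        _ ≤ p.natDegree := p.card_roots'
        _ = N := hdeg'
    have hSeq : S = p.roots.toFinset :=
      Finset.eq_of_subset_of_card_le hsub (by omega)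
    -- 1 - μ is a root
    have hzroot : (1 - μ) ∈ p.roots := by
      rw [Polynomial.mem_roots hpne, Polynomial.IsRoot, hp, eval_charpoly']
      exact hdet
    have : (1 - μ) ∈ S := by rw [hSeq]; exact Multiset.mem_toFinset.mpr hzroot
    rw [hS, Finset.mem_image] at this
    obtain ⟨ℓ, hℓ, hfℓ⟩ := this
    rw [Finset.mem_Icc] at hℓ
    refine ⟨ℓ, hℓ.1, hℓ.2, ?_, (bounds_aux ρ ⟨h0, h1⟩ _).1, (bounds_aux ρ ⟨h0, h1⟩ _).2⟩
    have hμeq : μ = 1 - f ℓ := by linear_combination hfℓ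
    rw [hμeq, hf]
    push_cast
    ring
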